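/- Let N > 0, φ₁, φ₂ ∈ (0,1), and k₁, k₂ > 0 be real numbers with k₁·φ₁ > 1. Let f_x, f̂_x, f_xy, f̂_xy be real numbers satisfying: f̂_xy − N/k₂ ≤ f_xy, f_x ≤ f̂_x, and f_x > (φ₁ − 1/k₁)·N (the bound holding for every reported primary-frequent candidate). If f_xy ≤ (φ₂ − (k₂·φ₂ + k₁)/(k₂·(k₁·φ₁ − 1)))·f_x, then f̂_xy ≤ φ₂·(f̂_x − N/k₁). (This is the second half of Theorem 2: no tuple whose primary item is a reported primary-frequent candidate and whose exact frequency is at most (φ₂ − (k₂φ₂ + k₁)/(k₂(k₁φ₁ − 1)))·f_x is reported as a correlated heavy hitter candidate.) -/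

import Mathlib

theorem cs_correlated_no_bad_false_positives
    (N φ₁ φ₂ k₁ k₂ fx fxhat fxy fxyhat : ℝ)
    (hN : 0 < N) (hφ₁ : 0 < φ₁) (hφ₁' : φ₁ < 1)
    (hφ₂ : 0 < φ₂) (hφ₂' : φ₂ < 1)
    (hk₁ : 0 < k₁) (hk₂ : 0 < k₂) (hk₁φ₁ : k₁ * φ₁ > 1)
    (herr : fxyhat - N / k₂ ≤ fxy)
    (hover : fx ≤ fxhat)
    (hcand : fx > (φ₁ - 1 / k₁) * N)
    (hfreq : fxy ≤ (φ₂ - (k₂ * φ₂ + k₁) / (k₂ * (k₁ * φ₁ - 1))) * fx) :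
    fxyhat ≤ φ₂ * (fxhat - N / k₁) := by
  have hpos : 0 < k₁ * φ₁ - 1 := by linarith
  have e1 : (1 / k₁) * k₁ = 1 := by field_simp
  have hfx : fx * k₁ > N * (k₁ * φ₁ - 1) := by nlinarith
  have hc : (k₂ * φ₂ + k₁) / (k₂ * (k₁ * φ₁ - 1)) * fx ≥ N / k₂ + φ₂ * (N / k₁) := by
    rw [ge_iff_le, div_mul_eq_mul_div, le_div_iff₀ (by positivity)]
    have key : ((N / k₂ + φ₂ * (N / k₁)) * (k₂ * (k₁ * φ₁ - 1))) * k₁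
        = (N * (k₁ * φ₁ - 1)) * (k₂ * φ₂ + k₁) := by field_simp; ring
    refine (mul_le_mul_iff_of_pos_right hk₁).mp ?_
    rw [key]
    nlinarith [mul_pos hk₂ hφ₂]
  have expand : (φ₂ - (k₂ * φ₂ + k₁) / (k₂ * (k₁ * φ₁ - 1))) * fx
      = φ₂ * fx - (k₂ * φ₂ + k₁) / (k₂ * (k₁ * φ₁ - 1)) * fx := by ring
  have expand2 : φ₂ * (fxhat - N / k₁) = φ₂ * fxhat - φ₂ * (N / k₁) := by ring
  rw [expand] at hfreq
  rw [expand2]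
  nlinarith [mul_le_mul_of_nonneg_left hover (le_of_lt hφ₂)]
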